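/- For every integer N ≥ 5, the quantity D_N := (1/d_N) · Σ_{i=1}^{N-1} d_i d_{N-i} satisfies D_N ≤ E(5)/N² where E(N) = (6/49)·N²/((N-6/7)(N-4/7)) + (240/49²)·N²/((N-4/7)(N-11/7)(N-13/7)), and in particular D_N ≤ 0.24/N². -/

import Mathlib

noncomputable def Efun (N : ℝ) : ℝ :=
  6 / 49 * N ^ 2 / ((N - 6 / 7) * (N - 4 / 7)) +
    240 / 2401 * N ^ 2 / ((N - 4 / 7) * (N - 11 / 7) * (N - 13 / 7))

lemma dpos (d : ℕ → ℝ) (hd0 : d 0 = 1)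
    (hd : ∀ n : ℕ, 1 ≤ n → d n = (7 * (n : ℝ) - 6) * (7 * (n : ℝ) - 4) / 4 * d (n - 1)) :
    ∀ n, 0 < d n := by
  intro n
  induction n with
  | zero => simp [hd0]
  | succ m ih =>
    rw [hd (m + 1) (by omega)]
    have h1 : (0:ℝ) < (7 * ((m:ℝ) + 1) - 6) * (7 * ((m:ℝ) + 1) - 4) / 4 := by
      nlinarith [Nat.cast_nonneg (α := ℝ) m]
    have h2 : d (m + 1 - 1) = d m := by norm_num
    rw [h2]
    push_cast
    exact mul_pos h1 ih

lemma dstep (d : ℕ → ℝ) (hd0 : d 0 = 1)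
    (hd : ∀ n : ℕ, 1 ≤ n → d n = (7 * (n : ℝ) - 6) * (7 * (n : ℝ) - 4) / 4 * d (n - 1)) :
    ∀ i j : ℕ, 1 ≤ i → i ≤ j + 1 → d i * d j ≤ d (i - 1) * d (j + 1) := by
  intro i j hi hij
  have hp := dpos d hd0 hd
  rw [hd i hi, hd (j + 1) (by omega)]
  have h2 : d (j + 1 - 1) = d j := by norm_num
  rw [h2]
  have hcast : (i : ℝ) ≤ (j : ℝ) + 1 := by exact_mod_cast hij
  have hone : (1 : ℝ) ≤ (i : ℝ) := by exact_mod_cast hi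
  have hA : (7 * (i:ℝ) - 6) * (7 * (i:ℝ) - 4) / 4 ≤
      (7 * ((j:ℕ) + 1 : ℝ) - 6) * (7 * ((j:ℕ) + 1 : ℝ) - 4) / 4 := by
    push_cast
    nlinarith
  have hA0 : (0:ℝ) ≤ (7 * (i:ℝ) - 6) * (7 * (i:ℝ) - 4) / 4 := by nlinarith
  have := mul_le_mul_of_nonneg_right hA (mul_pos (hp (i-1)) (hp j)).le
  push_cast at this ⊢
  nlinarith [this]

lemma dmono (d : ℕ → ℝ) (hd0 : d 0 = 1)
    (hd : ∀ n : ℕ, 1 ≤ n → d n = (7 * (n : ℝ) - 6) * (7 * (n : ℝ) - 4) / 4 * d (n - 1)) :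
    ∀ i j : ℕ, 2 ≤ i → i ≤ j + 1 → d i * d j ≤ d 2 * d (i + j - 2) := by
  intro i
  induction i with
  | zero => intro j h2 _; omega
  | succ k ih =>
    intro j h2 hij
    rcases Nat.lt_or_ge k 2 with hk | hk
    · have hk1 : k = 1 := by omega
      subst hk1
      have : 2 + j - 2 = j := by omega
      rw [this]
    · have h1 : d (k + 1) * d j ≤ d (k + 1 - 1) * d (j + 1) :=
        dstep d hd0 hd (k + 1) j (by omega) hij
      have h1' : d (k + 1 - 1) = d k := by norm_num
      rw [h1'] at h1
      have h2' : d k * d (j + 1) ≤ d 2 * d (k + (j + 1) - 2) := ih (j + 1) hk (by omega)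
      have he : k + (j + 1) - 2 = k + 1 + j - 2 := by omega
      rw [he] at h2'
      linarith

theorem DN_bound (d : ℕ → ℝ)
    (hd0 : d 0 = 1)
    (hd : ∀ n : ℕ, 1 ≤ n → d n = (7 * (n : ℝ) - 6) * (7 * (n : ℝ) - 4) / 4 * d (n - 1)) :
    ∀ N : ℕ, 5 ≤ N →
      (1 / d N) * ∑ i ∈ Finset.Icc 1 (N - 1), d i * d (N - i) ≤ Efun 5 / (N : ℝ) ^ 2 ∧
      (1 / d N) * ∑ i ∈ Finset.Icc 1 (N - 1), d i * d (N - i) ≤ 0.24 / (N : ℝ) ^ 2 := by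
  intro N hN
  have hp := dpos d hd0 hd
  set x : ℝ := (N : ℝ) with hx
  have hx5 : (5:ℝ) ≤ x := by rw [hx]; exact_mod_cast hN
  -- values of d1, d2
  have hd1 : d 1 = 3 / 4 := by
    have := hd 1 (by norm_num)
    norm_num at this
    linarith [this, hd0]
  have hd2 : d 2 = 15 := by
    have := hd 2 (by norm_num)
    norm_num [hd1] at this
    linarith
  -- express d N and d (N-1) in terms of c := d (N-2)
  set c : ℝ := d (N - 2) with hc
  have hcpos : 0 < c := hp _
  have hb : d (N - 1) = (7 * x - 13) * (7 * x - 11) / 4 * c := by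
    have h := hd (N - 1) (by omega)
    have h1 : N - 1 - 1 = N - 2 := by omega
    rw [h1] at h
    have h2 : ((N - 1 : ℕ) : ℝ) = x - 1 := by
      rw [hx]; push_cast [Nat.cast_sub (by omega : 1 ≤ N)]; ring
    rw [h2] at h
    rw [h, ← hc]; ring_nf
  have ha : d N = (7 * x - 6) * (7 * x - 4) * ((7 * x - 13) * (7 * x - 11)) / 16 * c := by
    have h := hd N (by omega)
    have h1 : N - 1 = N - 1 := rfl
    rw [hb] at h
    rw [h]; ring
  have hapos : 0 < d N := hp N
  -- sum decomposition
  have hset : Finset.Icc 1 (N - 1) = insert 1 (insert (N - 1) (Finset.Icc 2 (N - 2))) := by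
    ext i
    simp only [Finset.mem_Icc, Finset.mem_insert]
    omega
  have h1mem : (1 : ℕ) ∉ insert (N - 1) (Finset.Icc 2 (N - 2)) := by
    simp only [Finset.mem_insert, Finset.mem_Icc]
    omega
  have h2mem : N - 1 ∉ Finset.Icc 2 (N - 2) := by
    simp only [Finset.mem_Icc]
    omega
  have hsum : ∑ i ∈ Finset.Icc 1 (N - 1), d i * d (N - i)
      = d 1 * d (N - 1) + d (N - 1) * d 1 + ∑ i ∈ Finset.Icc 2 (N - 2), d i * d (N - i) := by
    rw [hset, Finset.sum_insert h1mem, Finset.sum_insert h2mem]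
    have e1 : N - (N - 1) = 1 := by omega
    rw [e1]
    ring
  -- bound on middle terms
  have hmid : ∀ i ∈ Finset.Icc 2 (N - 2), d i * d (N - i) ≤ d 2 * d (N - 2) := by
    intro i hi
    simp only [Finset.mem_Icc] at hi
    rcases le_total i (N - i) with h | h
    · have := dmono d hd0 hd i (N - i) hi.1 (by omega)
      have e : i + (N - i) - 2 = N - 2 := by omega
      rwa [e] at this
    · have := dmono d hd0 hd (N - i) i (by omega) (by omega)
      have e : N - i + i - 2 = N - 2 := by omega
      rw [e] at this
      calc d i * d (N - i) = d (N - i) * d i := by ring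
        _ ≤ d 2 * d (N - 2) := this
  have hcard : (Finset.Icc 2 (N - 2)).card = N - 3 := by
    rw [Nat.card_Icc]; omega
  have hmidsum : ∑ i ∈ Finset.Icc 2 (N - 2), d i * d (N - i) ≤ ((N : ℝ) - 3) * (d 2 * d (N - 2)) := by
    have := Finset.sum_le_card_nsmul (Finset.Icc 2 (N - 2)) _ (d 2 * d (N - 2)) hmid
    rw [hcard, nsmul_eq_mul] at this
    have e : ((N - 3 : ℕ) : ℝ) = (N : ℝ) - 3 := by
      push_cast [Nat.cast_sub (by omega : 3 ≤ N)]; ring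
    rwa [e] at this
  -- total bound on the sum
  have hS : ∑ i ∈ Finset.Icc 1 (N - 1), d i * d (N - i)
      ≤ 3 / 2 * d (N - 1) + (x - 3) * (15 * c) := by
    rw [hsum, hd1]
    have hm := hmidsum
    rw [hd2, ← hc, ← hx] at hm
    linarith [hm]
  have hSb : ∑ i ∈ Finset.Icc 1 (N - 1), d i * d (N - i)
      ≤ (3 / 2 * ((7 * x - 13) * (7 * x - 11) / 4) + 15 * (x - 3)) * c := by
    rw [hb] at hS
    nlinarith [hS]
  have hx2 : (0:ℝ) < x ^ 2 := by positivity
  have hEfun : Efun 5 = 15175 / 69223 := by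
    unfold Efun; norm_num
  -- main inequality
  have key : (1 / d N) * ∑ i ∈ Finset.Icc 1 (N - 1), d i * d (N - i) ≤ (15175 / 69223) / x ^ 2 := by
    rw [one_div, inv_mul_eq_div, div_le_div_iff₀ hapos hx2]
    have hpoly : (3 / 2 * ((7 * x - 13) * (7 * x - 11) / 4) + 15 * (x - 3)) * c * x ^ 2
        ≤ 15175 / 69223 * ((7 * x - 6) * (7 * x - 4) * ((7 * x - 13) * (7 * x - 11)) / 16 * c) := by
      have h5 : (0:ℝ) ≤ x - 5 := by linarith
      nlinarith [hcpos, sq_nonneg (x - 5), mul_nonneg h5 (sq_nonneg (x - 5)),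
        mul_nonneg (sq_nonneg (x - 5)) (sq_nonneg (x - 5)),
        mul_pos hcpos hx2,
        mul_nonneg (mul_nonneg hcpos.le h5) h5,
        mul_nonneg (mul_nonneg (mul_nonneg hcpos.le h5) h5) h5,
        mul_nonneg (mul_nonneg (mul_nonneg (mul_nonneg hcpos.le h5) h5) h5) h5,
        mul_nonneg hcpos.le h5]
    calc (∑ i ∈ Finset.Icc 1 (N - 1), d i * d (N - i)) * x ^ 2
        ≤ (3 / 2 * ((7 * x - 13) * (7 * x - 11) / 4) + 15 * (x - 3)) * c * x ^ 2 := by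
          nlinarith [hSb, hx2]
      _ ≤ 15175 / 69223 * ((7 * x - 6) * (7 * x - 4) * ((7 * x - 13) * (7 * x - 11)) / 16 * c) := hpoly
      _ = 15175 / 69223 * d N := by rw [ha]
  constructor
  · rw [hEfun]; exact key
  · refine le_trans key ?_
    have h24 : (15175 / 69223 : ℝ) ≤ 0.24 := by norm_num
    gcongr
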